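/- Non-repetitive alternating plays with pointers on a conflict-free arena A are in bijection with alternating plays on A: given a sequence of distinct events forming an alternating play, the pointer structure is uniquely determined by the arena's immediate causality, and conversely every valid play with pointers whose events are pairwise distinct arises from a unique alternating play. -/

import Mathlib

set_option autoImplicit false

/-- Immediate causality `a ⋗ b` for a relation `le`: `a < b` with nothing strictly
in between. -/
def immOf {α : Type} (le : α → α → Prop) (a b : α) : Prop :=
  le a b ∧ a ≠ b ∧ ∀ c, le a c → le c b → c = a ∨ c = b

/-- Configurations: finite, down-closed, consistent sets. -/
def ConfigOf {α : Type} (le conflict : α → α → Prop) (x : Set α) : Prop :=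
  x.Finite ∧ (∀ e ∈ x, ∀ e', le e' e → e' ∈ x) ∧ ∀ e ∈ x, ∀ e' ∈ x, ¬ conflict e e'

/-- Minimality for a causal dependency relation. -/
def MinimalOf {α : Type} (le : α → α → Prop) (a : α) : Prop := ∀ a', le a' a → a' = a

/-- An arena: an event structure with polarities (`true` = Player `+`,
`false` = Opponent `−`) which is alternating, forestial and race-free. -/
structure Arena (α : Type) where
  le : α → α → Prop
  conflict : α → α → Prop
  pol : α → Bool
  le_refl : ∀ e, le e e
  le_trans : ∀ {a b c : α}, le a b → le b c → le a c
  le_antisymm : ∀ {a b : α}, le a b → le b a → a = b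
  finite_causes : ∀ e : α, Set.Finite {e' | le e' e}
  conflict_irrefl : ∀ e, ¬ conflict e e
  conflict_symm : ∀ {a b : α}, conflict a b → conflict b a
  conflict_inherit : ∀ {a b b' : α}, conflict a b → le b b' → conflict a b'
  alternating : ∀ {a b : α}, immOf le a b → pol a ≠ pol b
  forestial : ∀ {a1 a2 a : α}, le a1 a → le a2 a → le a1 a2 ∨ le a2 a1
  race_free : ∀ {a1 a2 : α}, conflict a1 a2 →
    (∀ a1' a2', le a1' a1 → le a2' a2 → conflict a1' a2' → a1' = a1 ∧ a2' = a2) →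
    pol a1 = pol a2

/-- An alternating play: every prefix reaches a configuration (valid), events are
pairwise distinct (non-repetitive), polarities alternate, and the first move (if
any) is negative. -/
def AltPlayOf {α : Type} (le conflict : α → α → Prop) (pol : α → Bool) (s : List α) : Prop :=
  (∀ t, t <+: s → ConfigOf le conflict {a | a ∈ t}) ∧
  s.Nodup ∧
  (∀ (i : ℕ) (a b : α), s[i]? = some a → s[i + 1]? = some b → pol a ≠ pol b) ∧
  (∀ a : α, s[0]? = some a → pol a = false)

/-- Pointer data for a sequence of events: each non-minimal event `s_j` points to
an earlier occurrence `s_{p j}` of its immediate causal predecessor in the arena. -/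
def IsPointerFor {α : Type} (A : Arena α) (s : List α) (p : ℕ → ℕ) : Prop :=
  ∀ (j : ℕ) (a : α), s[j]? = some a → ¬ MinimalOf A.le a →
    p j < j ∧ ∃ b, s[p j]? = some b ∧ immOf A.le b a

/-- An alternating sequence of events with a negative first move (the conditions of
a play with pointers that do not refer to validity). -/
def AltSeq {α : Type} (A : Arena α) (s : List α) : Prop :=
  (∀ (i : ℕ) (a b : α), s[i]? = some a → s[i + 1]? = some b → A.pol a ≠ A.pol b) ∧
  (∀ a : α, s[0]? = some a → A.pol a = false)


section Aux
variable {α : Type}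

lemma chain_max (le : α → α → Prop) (hrefl : ∀ e, le e e)
    (htrans : ∀ {a b c : α}, le a b → le b c → le a c) :
    ∀ (S : Finset α), S.Nonempty → (∀ a ∈ S, ∀ b ∈ S, le a b ∨ le b a) →
    ∃ m ∈ S, ∀ c ∈ S, le c m := by
  classical
  intro S
  induction S using Finset.induction with
  | empty => intro h; simp at h
  | @insert a S ha IH =>
    intro _ htot
    rcases S.eq_empty_or_nonempty with rfl | hSne
    · exact ⟨a, by simp, by simp [hrefl]⟩
    · obtain ⟨m, hm, hmax⟩ := IH hSne
        (fun x hx y hy => htot x (by simp [hx]) y (by simp [hy]))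
      rcases htot a (by simp) m (by simp [hm]) with h | h
      · refine ⟨m, by simp [hm], ?_⟩
        intro c hc
        rcases Finset.mem_insert.1 hc with rfl | hc
        · exact h
        · exact hmax c hc
      · refine ⟨a, by simp, ?_⟩
        intro c hc
        rcases Finset.mem_insert.1 hc with rfl | hc
        · exact hrefl c
        · exact htrans (hmax c hc) h

lemma exists_imm_pred (A : Arena α) {a : α} (hna : ¬ MinimalOf A.le a) :
    ∃ b, immOf A.le b a := by
  have hfin : Set.Finite {e' | A.le e' a ∧ e' ≠ a} :=
    (A.finite_causes a).subset (fun x hx => hx.1)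
  obtain ⟨a', ha', hne⟩ : ∃ a', A.le a' a ∧ a' ≠ a := by
    by_contra h
    push_neg at h
    exact hna (fun a' h' => h a' h')
  have hSne : hfin.toFinset.Nonempty := ⟨a', by simp [hfin.mem_toFinset]; exact ⟨ha', hne⟩⟩
  have htot : ∀ x ∈ hfin.toFinset, ∀ y ∈ hfin.toFinset, A.le x y ∨ A.le y x := by
    intro x hx y hy
    simp [hfin.mem_toFinset] at hx hy
    exact A.forestial hx.1 hy.1
  obtain ⟨m, hm, hmax⟩ := chain_max A.le A.le_refl (fun h1 h2 => A.le_trans h1 h2)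
    hfin.toFinset hSne htot
  simp [hfin.mem_toFinset] at hm
  refine ⟨m, hm.1, hm.2, ?_⟩
  intro c hmc hca
  by_cases hc : c = a
  · exact Or.inr hc
  · have : c ∈ hfin.toFinset := by simp [hfin.mem_toFinset]; exact ⟨hca, hc⟩
    exact Or.inl (A.le_antisymm (hmax c this) hmc)

lemma imm_pred_unique (A : Arena α) {a b b' : α}
    (hb : immOf A.le b a) (hb' : immOf A.le b' a) : b = b' := by
  rcases A.forestial hb.1 hb'.1 with h | h
  · rcases hb.2.2 b' h hb'.1 with h' | h'
    · exact h'.symm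
    · exact absurd h' hb'.2.1
  · rcases hb'.2.2 b h hb.1 with h' | h'
    · exact h'
    · exact absurd h' hb.2.1

lemma pointer_downclosed (A : Arena α) (s : List α) (p : ℕ → ℕ)
    (hp : IsPointerFor A s p) :
    ∀ j, ∀ a : α, s[j]? = some a → ∀ e', A.le e' a → ∃ i : ℕ, i ≤ j ∧ s[i]? = some e' := by
  intro j
  induction j using Nat.strong_induction_on with
  | _ j IH =>
    intro a ha e' hle
    by_cases he : e' = a
    · exact ⟨j, le_rfl, he ▸ ha⟩
    · have hna : ¬ MinimalOf A.le a := fun h => he (h e' hle)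
      obtain ⟨hlt, b, hb, himm⟩ := hp j a ha hna
      have hle' : A.le e' b := by
        rcases A.forestial hle himm.1 with h | h
        · exact h
        · rcases himm.2.2 e' h hle with h' | h'
          · subst h'; exact A.le_refl e'
          · exact absurd h' he
      obtain ⟨i, hi, hie⟩ := IH (p j) hlt b hb e' hle'
      exact ⟨i, hi.trans hlt.le, hie⟩

lemma prefix_getElem? {s t : List α} (ht : t <+: s) {i : ℕ} (hi : i < t.length) :
    s[i]? = t[i]? := by
  obtain ⟨u, rfl⟩ := ht
  exact List.getElem?_append_left hi

end Aux

/-- On a conflict-free arena, non-repetitive alternating plays with pointers are in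
bijection with alternating plays: every alternating play admits a pointer structure,
uniquely determined (on non-minimal occurrences) by the arena's immediate causality;
conversely, every alternating non-repetitive sequence equipped with valid pointers
is an alternating play. -/
theorem plays_with_pointers_bijection {α : Type} (A : Arena α)
    (hconfree : ∀ a b : α, ¬ A.conflict a b) :
    (∀ s : List α, AltPlayOf A.le A.conflict A.pol s →
      ((∃ p : ℕ → ℕ, IsPointerFor A s p) ∧
        ∀ p p' : ℕ → ℕ, IsPointerFor A s p → IsPointerFor A s p' →
          ∀ (j : ℕ) (a : α), s[j]? = some a → ¬ MinimalOf A.le a → p j = p' j)) ∧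
    (∀ (s : List α) (p : ℕ → ℕ), AltSeq A s → s.Nodup → IsPointerFor A s p →
      AltPlayOf A.le A.conflict A.pol s) := by
  constructor
  · -- forward direction
    intro s hs
    have hconf := hs.1
    have hnodup := hs.2.1
    -- key: existence of a pointer for each non-minimal position
    have hkey : ∀ (j : ℕ) (a : α), s[j]? = some a → ¬ MinimalOf A.le a →
        ∃ i, i < j ∧ ∃ b, s[i]? = some b ∧ immOf A.le b a := by
      intro j a ha hna
      obtain ⟨b, hb⟩ := exists_imm_pred A hna
      have hcfg := hconf (s.take (j + 1)) (List.take_prefix _ _)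
      have hjlen : j < s.length := (List.getElem?_eq_some_iff.1 ha).1
      have hat : (s.take (j + 1))[j]? = some a := by
        rw [List.getElem?_take]
        simp [ha]
      have hamem : a ∈ s.take (j + 1) := List.mem_iff_getElem?.2 ⟨j, hat⟩
      have hbmem : b ∈ s.take (j + 1) := hcfg.2.1 a hamem b hb.1
      obtain ⟨i, hib⟩ := List.mem_iff_getElem?.1 hbmem
      have hilen : i < (s.take (j + 1)).length := (List.getElem?_eq_some_iff.1 hib).1
      have hij : i < j + 1 := lt_of_lt_of_le hilen (by simp [List.length_take])
      have hsib : s[i]? = some b := (prefix_getElem? (List.take_prefix _ _) hilen).trans hib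
      have hinej : i ≠ j := by
        intro h
        subst h
        rw [ha] at hsib
        exact hb.2.1 (Option.some.inj hsib).symm
      exact ⟨i, lt_of_le_of_ne (Nat.lt_succ_iff.1 hij) hinej, b, hsib, hb⟩
    constructor
    · classical
      refine ⟨fun j => if h : ∃ i, i < j ∧ ∃ b, s[i]? = some b ∧
          ∃ a, s[j]? = some a ∧ immOf A.le b a then h.choose else 0, ?_⟩
      intro j a ha hna
      dsimp only
      obtain ⟨i, hij, b, hib, himm⟩ := hkey j a ha hna
      have hex : ∃ i, i < j ∧ ∃ b, s[i]? = some b ∧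
          ∃ a, s[j]? = some a ∧ immOf A.le b a := ⟨i, hij, b, hib, a, ha, himm⟩
      rw [dif_pos hex]
      obtain ⟨h1, b', hb', a', ha', himm'⟩ := hex.choose_spec
      rw [ha] at ha'
      exact ⟨h1, b', hb', (Option.some.inj ha') ▸ himm'⟩
    · intro p p' hp hp' j a ha hna
      obtain ⟨h1, b, hb, himm⟩ := hp j a ha hna
      obtain ⟨h1', b', hb', himm'⟩ := hp' j a ha hna
      have hbb : b = b' := imm_pred_unique A himm himm'
      subst hbb
      exact (List.getElem?_inj (List.getElem?_eq_some_iff.1 hb).1 hnodup).1 (hb.trans hb'.symm)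
  · -- backward direction
    intro s p hseq hnodup hp
    refine ⟨?_, hnodup, hseq.1, hseq.2⟩
    intro t ht
    refine ⟨t.finite_toSet, ?_, ?_⟩
    · intro e he e' hle
      obtain ⟨j, hj⟩ := List.mem_iff_getElem?.1 he
      have hjlen : j < t.length := (List.getElem?_eq_some_iff.1 hj).1
      have hsj : s[j]? = some e := (prefix_getElem? ht hjlen).trans hj
      obtain ⟨i, hij, hsi⟩ := pointer_downclosed A s p hp j e hsj e' hle
      have hilen : i < t.length := lt_of_le_of_lt hij hjlen
      have : t[i]? = some e' := (prefix_getElem? ht hilen).symm.trans hsi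
      exact List.mem_iff_getElem?.2 ⟨i, this⟩
    · intro e _ e' _
      exact hconfree e e'
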